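/- For any quaternion matrix X ∈ ℍ^{M×N} with quaternion singular value decomposition X = U D V^H (D real diagonal with nonnegative entries σ₁ ≥ ⋯ ≥ σ_{min(M,N)}), and any quaternion matrices A ∈ ℍ^{r×M}, B ∈ ℍ^{r×N} with A A^H = I_r and B B^H = I_r, the modulus of the trace satisfies |tr(A X B^H)| ≤ ∑_{i=1}^r σ_i(X). -/

import Mathlib

open Matrix Finset

lemma qcoe_sum {ι : Type*} (s : Finset ι) (f : ι → ℝ) :
    ((∑ i ∈ s, f i : ℝ) : Quaternion ℝ) = ∑ i ∈ s, ((f i : ℝ) : Quaternion ℝ) := by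
  rw [← Quaternion.algebraMap_def, map_sum]

/-- Row norms: if `P * Pᴴ = 1` then each row has norm 1. -/
lemma row_norm_eq {r n : ℕ} (P : Matrix (Fin r) (Fin n) (Quaternion ℝ))
    (hP : P * Pᴴ = 1) (k : Fin r) : ∑ j : Fin n, ‖P k j‖ ^ 2 = 1 := by
  have h := congrFun (congrFun hP k) k
  rw [Matrix.mul_apply] at h
  simp only [conjTranspose_apply, Matrix.one_apply_eq] at h
  have h2 : ∀ j : Fin n, P k j * star (P k j) = ((‖P k j‖ ^ 2 : ℝ) : Quaternion ℝ) := by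
    intro j
    rw [Quaternion.self_mul_star, Quaternion.normSq_eq_norm_mul_self, sq]
  rw [Finset.sum_congr rfl (fun j _ => h2 j), ← qcoe_sum] at h
  have : ((∑ j : Fin n, ‖P k j‖ ^ 2 : ℝ) : Quaternion ℝ) = ((1 : ℝ) : Quaternion ℝ) := by
    rw [h]; norm_num
  exact Quaternion.coe_injective this

/-- Column norms: if `P * Pᴴ = 1` then each column has norm at most 1. -/
lemma col_norm_le {r n : ℕ} (P : Matrix (Fin r) (Fin n) (Quaternion ℝ))
    (hP : P * Pᴴ = 1) (j : Fin n) : ∑ k : Fin r, ‖P k j‖ ^ 2 ≤ 1 := by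
  set G := Pᴴ * P with hG
  have hGG : G * G = G := by
    rw [hG, Matrix.mul_assoc, ← Matrix.mul_assoc P, hP, Matrix.one_mul]
  have hGH : ∀ a b, G b a = star (G a b) := by
    intro a b
    have hH : Gᴴ = G := by rw [hG, conjTranspose_mul, conjTranspose_conjTranspose]
    have := congrFun (congrFun hH b) a
    rw [conjTranspose_apply] at this
    exact this.symm
  set d : ℝ := ∑ k : Fin r, ‖P k j‖ ^ 2 with hd
  have hd0 : 0 ≤ d := Finset.sum_nonneg fun _ _ => sq_nonneg _
  have hdiag : G j j = ((d : ℝ) : Quaternion ℝ) := by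
    rw [hG, Matrix.mul_apply, hd, qcoe_sum]
    refine Finset.sum_congr rfl fun k _ => ?_
    rw [conjTranspose_apply, Quaternion.star_mul_self, Quaternion.normSq_eq_norm_mul_self, sq]
  have hkey : ((d : ℝ) : Quaternion ℝ) = ((∑ i : Fin n, ‖G j i‖ ^ 2 : ℝ) : Quaternion ℝ) := by
    rw [← hdiag]
    conv_lhs => rw [← hGG]
    rw [Matrix.mul_apply, qcoe_sum]
    refine Finset.sum_congr rfl fun i _ => ?_
    rw [hGH j i, Quaternion.self_mul_star, Quaternion.normSq_eq_norm_mul_self, sq]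
  have hkey' : d = ∑ i : Fin n, ‖G j i‖ ^ 2 := Quaternion.coe_injective hkey
  have hsingle : ‖G j j‖ ^ 2 ≤ ∑ i : Fin n, ‖G j i‖ ^ 2 :=
    Finset.single_le_sum (f := fun i => ‖G j i‖ ^ 2) (fun _ _ => sq_nonneg _)
      (Finset.mem_univ j)
  have hnorm : ‖G j j‖ = d := by
    rw [hdiag, Quaternion.norm_coe, Real.norm_eq_abs, abs_of_nonneg hd0]
  rw [hnorm, ← hkey'] at hsingle
  nlinarith

theorem quat_trace_inequality {M N r : ℕ} (hr : r ≤ min M N)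
    (X : Matrix (Fin M) (Fin N) (Quaternion ℝ))
    (U : Matrix (Fin M) (Fin M) (Quaternion ℝ))
    (V : Matrix (Fin N) (Fin N) (Quaternion ℝ))
    (hU1 : U * Uᴴ = 1) (hU2 : Uᴴ * U = 1)
    (hV1 : V * Vᴴ = 1) (hV2 : Vᴴ * V = 1)
    (σ : ℕ → ℝ) (hσnonneg : ∀ i, 0 ≤ σ i)
    (hσanti : ∀ i j : ℕ, i ≤ j → σ j ≤ σ i)
    (hX : X = U * (Matrix.of fun (i : Fin M) (j : Fin N) =>
      if (i : ℕ) = (j : ℕ) then ((σ (i : ℕ) : ℝ) : Quaternion ℝ) else 0) * Vᴴ)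
    (A : Matrix (Fin r) (Fin M) (Quaternion ℝ))
    (B : Matrix (Fin r) (Fin N) (Quaternion ℝ))
    (hA : A * Aᴴ = 1) (hB : B * Bᴴ = 1) :
    ‖Matrix.trace (A * X * Bᴴ)‖ ≤ ∑ i ∈ Finset.range r, σ i := by
  set L := min M N with hL
  set D : Matrix (Fin M) (Fin N) (Quaternion ℝ) :=
    Matrix.of fun (i : Fin M) (j : Fin N) =>
      if (i : ℕ) = (j : ℕ) then ((σ (i : ℕ) : ℝ) : Quaternion ℝ) else 0 with hD
  set P : Matrix (Fin r) (Fin M) (Quaternion ℝ) := A * U with hPdef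
  set Q : Matrix (Fin r) (Fin N) (Quaternion ℝ) := B * V with hQdef
  have hP : P * Pᴴ = 1 := by
    rw [hPdef, conjTranspose_mul, Matrix.mul_assoc, ← Matrix.mul_assoc U, hU1,
      Matrix.one_mul, hA]
  have hQ : Q * Qᴴ = 1 := by
    rw [hQdef, conjTranspose_mul, Matrix.mul_assoc, ← Matrix.mul_assoc V, hV1,
      Matrix.one_mul, hB]
  have hrw : A * X * Bᴴ = P * D * Qᴴ := by
    rw [hX, hPdef, hQdef, conjTranspose_mul]
    simp only [Matrix.mul_assoc]
  -- the column-profile functions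
  set p : Fin r → ℕ → ℝ := fun k n => if h : n < M then ‖P k ⟨n, h⟩‖ else 0 with hp
  set q : Fin r → ℕ → ℝ := fun k n => if h : n < N then ‖Q k ⟨n, h⟩‖ else 0 with hq
  have hp0 : ∀ k n, 0 ≤ p k n := by
    intro k n; rw [hp]; dsimp only; split <;> simp [norm_nonneg]
  have hq0 : ∀ k n, 0 ≤ q k n := by
    intro k n; rw [hq]; dsimp only; split <;> simp [norm_nonneg]
  -- step 1 : norm bound by the weighted sum
  have step1 : ‖Matrix.trace (A * X * Bᴴ)‖ ≤
      ∑ n ∈ Finset.range L, σ n * ∑ k : Fin r, p k n * q k n := by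
    rw [hrw]
    have htr : (P * D * Qᴴ).trace =
        ∑ k : Fin r, ∑ j : Fin N, ∑ i : Fin M, P k i * D i j * star (Q k j) := by
      rw [Matrix.trace]
      refine Finset.sum_congr rfl fun k _ => ?_
      simp only [Matrix.diag_apply, Matrix.mul_apply, conjTranspose_apply, Finset.sum_mul]
    rw [htr]
    have hb : ‖∑ k : Fin r, ∑ j : Fin N, ∑ i : Fin M, P k i * D i j * star (Q k j)‖ ≤
        ∑ k : Fin r, ∑ j : Fin N, ∑ i : Fin M, ‖P k i‖ * ‖D i j‖ * ‖Q k j‖ := by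
      refine (norm_sum_le _ _).trans (Finset.sum_le_sum fun k _ => ?_)
      refine (norm_sum_le _ _).trans (Finset.sum_le_sum fun j _ => ?_)
      refine (norm_sum_le _ _).trans (le_of_eq (Finset.sum_congr rfl fun i _ => ?_))
      rw [norm_mul, norm_mul, norm_star]
    refine hb.trans (le_of_eq ?_)
    have hinner : ∀ (k : Fin r) (j : Fin N),
        ∑ i : Fin M, ‖P k i‖ * ‖D i j‖ * ‖Q k j‖ =
        σ (j : ℕ) * (p k (j : ℕ) * q k (j : ℕ)) := by
      intro k j
      set g : ℕ → ℝ := fun n => if n = (j : ℕ) then σ n * (p k n * ‖Q k j‖) else 0 with hg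
      have h1 : ∀ i : Fin M, ‖P k i‖ * ‖D i j‖ * ‖Q k j‖ = g (i : ℕ) := by
        intro i
        rw [hg]; dsimp only
        by_cases hij : (i : ℕ) = (j : ℕ)
        · rw [if_pos hij, hD]
          simp only [Matrix.of_apply, if_pos hij, Quaternion.norm_coe, Real.norm_eq_abs,
            abs_of_nonneg (hσnonneg _)]
          rw [hp]; dsimp only
          rw [dif_pos i.isLt]
          simp only [Fin.eta]
          ring
        · rw [if_neg hij, hD]
          simp only [Matrix.of_apply, if_neg hij, norm_zero]
          ring
      rw [Finset.sum_congr rfl fun i _ => h1 i,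
        Fin.sum_univ_eq_sum_range g M, Finset.sum_ite_eq' (Finset.range M) ((j : ℕ))
          (fun n => σ n * (p k n * ‖Q k j‖))]
      by_cases hjM : (j : ℕ) < M
      · rw [if_pos (Finset.mem_range.mpr hjM)]
        have hq' : ‖Q k j‖ = q k (j : ℕ) := by
          rw [hq]; dsimp only; rw [dif_pos j.isLt]
        rw [hq']
      · rw [if_neg (fun hmem => hjM (Finset.mem_range.mp hmem))]
        have hp' : p k (j : ℕ) = 0 := by
          rw [hp]; dsimp only; rw [dif_neg hjM]
        rw [hp']
        ring
    calc ∑ k : Fin r, ∑ j : Fin N, ∑ i : Fin M, ‖P k i‖ * ‖D i j‖ * ‖Q k j‖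
        = ∑ k : Fin r, ∑ n ∈ Finset.range N, σ n * (p k n * q k n) := by
          refine Finset.sum_congr rfl fun k _ => ?_
          rw [Finset.sum_congr rfl fun j _ => hinner k j,
            Fin.sum_univ_eq_sum_range (fun n => σ n * (p k n * q k n)) N]
      _ = ∑ k : Fin r, ∑ n ∈ Finset.range L, σ n * (p k n * q k n) := by
          refine Finset.sum_congr rfl fun k _ => ?_
          refine (Finset.sum_subset (Finset.range_subset_range.mpr (min_le_right M N))
            fun n hn hn' => ?_).symm
          have hnN : n < N := Finset.mem_range.mp hn
          have hnL : ¬ n < L := fun h => hn' (Finset.mem_range.mpr h)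
          have hnM : ¬ n < M := fun h => hnL (lt_min h hnN)
          have : p k n = 0 := by rw [hp]; dsimp only; rw [dif_neg hnM]
          rw [this]; ring
      _ = ∑ n ∈ Finset.range L, σ n * ∑ k : Fin r, p k n * q k n := by
          rw [Finset.sum_comm]
          exact Finset.sum_congr rfl fun n _ => by rw [Finset.mul_sum]
  refine step1.trans ?_
  -- step 2 : the weighted sum is bounded by ∑_{i<r} σ i
  set c : ℕ → ℝ := fun n => ∑ k : Fin r, p k n * q k n with hc
  have hc0 : ∀ n, 0 ≤ c n := fun n =>
    Finset.sum_nonneg fun k _ => mul_nonneg (hp0 k n) (hq0 k n)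
  have hcolp : ∀ n, ∑ k : Fin r, p k n ^ 2 ≤ 1 := by
    intro n
    rw [hp]; dsimp only
    by_cases h : n < M
    · simp only [dif_pos h]; exact col_norm_le P hP ⟨n, h⟩
    · simp only [dif_neg h]; norm_num
  have hcolq : ∀ n, ∑ k : Fin r, q k n ^ 2 ≤ 1 := by
    intro n
    rw [hq]; dsimp only
    by_cases h : n < N
    · simp only [dif_pos h]; exact col_norm_le Q hQ ⟨n, h⟩
    · simp only [dif_neg h]; norm_num
  have hc1 : ∀ n, c n ≤ 1 := by
    intro n
    refine (Real.sum_mul_le_sqrt_mul_sqrt _ _ _).trans ?_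
    exact mul_le_one₀ (Real.sqrt_le_one.mpr (hcolp n)) (Real.sqrt_nonneg _)
      (Real.sqrt_le_one.mpr (hcolq n))
  have hrowp : ∀ k, ∑ n ∈ Finset.range L, p k n ^ 2 ≤ 1 := by
    intro k
    have h1 : ∑ n ∈ Finset.range L, p k n ^ 2 ≤ ∑ n ∈ Finset.range M, p k n ^ 2 :=
      Finset.sum_le_sum_of_subset_of_nonneg
        (Finset.range_subset_range.mpr (le_trans (min_le_left _ _) le_rfl))
        (fun n _ _ => sq_nonneg _)
    have h2 : ∑ n ∈ Finset.range M, p k n ^ 2 = ∑ i : Fin M, ‖P k i‖ ^ 2 := by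
      rw [← Fin.sum_univ_eq_sum_range (fun n => p k n ^ 2) M]
      refine Finset.sum_congr rfl fun i _ => ?_
      rw [hp]; simp
    rw [h2, row_norm_eq P hP k] at h1
    exact h1
  have hrowq : ∀ k, ∑ n ∈ Finset.range L, q k n ^ 2 ≤ 1 := by
    intro k
    have h1 : ∑ n ∈ Finset.range L, q k n ^ 2 ≤ ∑ n ∈ Finset.range N, q k n ^ 2 :=
      Finset.sum_le_sum_of_subset_of_nonneg
        (Finset.range_subset_range.mpr (min_le_right _ _))
        (fun n _ _ => sq_nonneg _)
    have h2 : ∑ n ∈ Finset.range N, q k n ^ 2 = ∑ i : Fin N, ‖Q k i‖ ^ 2 := by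
      rw [← Fin.sum_univ_eq_sum_range (fun n => q k n ^ 2) N]
      refine Finset.sum_congr rfl fun i _ => ?_
      rw [hq]; simp
    rw [h2, row_norm_eq Q hQ k] at h1
    exact h1
  have hcr : ∑ n ∈ Finset.range L, c n ≤ (r : ℝ) := by
    rw [hc]
    rw [Finset.sum_comm]
    calc ∑ k : Fin r, ∑ n ∈ Finset.range L, p k n * q k n
        ≤ ∑ k : Fin r, (1 : ℝ) := by
          refine Finset.sum_le_sum fun k _ => ?_
          refine (Real.sum_mul_le_sqrt_mul_sqrt _ _ _).trans ?_
          exact mul_le_one₀ (Real.sqrt_le_one.mpr (hrowp k)) (Real.sqrt_nonneg _)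
            (Real.sqrt_le_one.mpr (hrowq k))
      _ = (r : ℝ) := by simp
  -- final summation argument
  have expand : ∀ n ∈ Finset.range L, σ n * c n = (σ n - σ r) * c n + σ r * c n := by
    intro n _; ring
  calc ∑ n ∈ Finset.range L, σ n * c n
      = ∑ n ∈ Finset.range L, ((σ n - σ r) * c n) + σ r * ∑ n ∈ Finset.range L, c n := by
        rw [Finset.sum_congr rfl expand, Finset.sum_add_distrib, Finset.mul_sum]
    _ ≤ ∑ n ∈ Finset.range r, ((σ n - σ r) * c n) + σ r * (r : ℝ) := by
        refine add_le_add ?_ (mul_le_mul_of_nonneg_left hcr (hσnonneg r))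
        have hsplit : ∑ n ∈ Finset.range r, ((σ n - σ r) * c n) +
            ∑ n ∈ Finset.Ico r L, ((σ n - σ r) * c n) =
            ∑ n ∈ Finset.range L, ((σ n - σ r) * c n) := by
          simp only [Finset.range_eq_Ico]
          exact Finset.sum_Ico_consecutive _ (Nat.zero_le r) hr
        rw [← hsplit]
        have hneg : ∑ n ∈ Finset.Ico r L, ((σ n - σ r) * c n) ≤ 0 := by
          refine Finset.sum_nonpos fun n hn => ?_
          have hrn : r ≤ n := (Finset.mem_Ico.mp hn).1
          exact mul_nonpos_of_nonpos_of_nonneg (by linarith [hσanti r n hrn]) (hc0 n)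
        linarith
    _ ≤ ∑ n ∈ Finset.range r, (σ n - σ r) + σ r * (r : ℝ) := by
        refine add_le_add (Finset.sum_le_sum fun n hn => ?_) le_rfl
        have hnr : n ≤ r := le_of_lt (Finset.mem_range.mp hn)
        have h1 : 0 ≤ σ n - σ r := by linarith [hσanti n r hnr]
        calc (σ n - σ r) * c n ≤ (σ n - σ r) * 1 :=
              mul_le_mul_of_nonneg_left (hc1 n) h1
          _ = σ n - σ r := mul_one _
    _ = ∑ n ∈ Finset.range r, σ n := by
        rw [Finset.sum_sub_distrib, Finset.sum_const, Finset.card_range, nsmul_eq_mul]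
        ring
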